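/- Assume ker T = {0}. If f₀ ∈ G \ ∂G₀ satisfies ∇TWR_N(f₀) = 0, then the Hessian of [TWR_N]^{1/N} at f₀ is negative definite; in particular [TWR_N]^{1/N} is strictly concave at f₀. -/

import Mathlib

/-- At a critical point of TWR_N in G \ ∂G₀, the Hessian of [TWR_N]^{1/N},
namely −(TWR^{1/N}/N)·Σᵢ yᵢᵀyᵢ with yᵢ = (tᵢ/t̂)/(1+⟨tᵢ/t̂,f₀⟩), is negative definite. -/
theorem stmt9 (N M : ℕ) (hN : 0 < N) (T : Fin N → Fin M → ℝ) (that : Fin M → ℝ)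
    (hthat : ∀ k, 0 < that k)
    (hker : ∀ ψ : Fin M → ℝ, (∀ i, ∑ k, T i k * ψ k = 0) → ψ = 0)
    (f0 : Fin M → ℝ) (h0 : ∀ k, 0 ≤ f0 k)
    (hpos : ∀ i, 0 < 1 + ∑ k, (T i k / that k) * f0 k)
    (hgrad : ∀ j, (∑ i, (T i j / that j) / (1 + ∑ k, (T i k / that k) * f0 k)) = 0) :
    ∀ ψ : Fin M → ℝ, ψ ≠ 0 →
      (∑ j, ∑ l, ψ j *
        (-(((∏ i, (1 + ∑ k, (T i k / that k) * f0 k)) ^ ((1 : ℝ) / N)) / N) *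
          ∑ i, ((T i j / that j) / (1 + ∑ k, (T i k / that k) * f0 k)) *
               ((T i l / that l) / (1 + ∑ k, (T i k / that k) * f0 k))) * ψ l) < 0 := by
  intro ψ hψ
  set d : Fin N → ℝ := fun i => 1 + ∑ k, (T i k / that k) * f0 k with hd
  set y : Fin N → Fin M → ℝ := fun i j => (T i j / that j) / d i with hy
  set C : ℝ := (∏ i, d i) ^ ((1 : ℝ) / N) with hC
  have hCpos : 0 < C := Real.rpow_pos_of_pos (Finset.prod_pos fun i _ => hpos i) _
  have key : (∑ j, ∑ l, ψ j * (-(C / N) * ∑ i, y i j * y i l) * ψ l)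
      = -(C / N) * ∑ i, (∑ j, ψ j * y i j) ^ 2 := by
    have h1 : (∑ j, ∑ l, ψ j * (-(C / N) * ∑ i, y i j * y i l) * ψ l)
        = ∑ j, ∑ l, ∑ i, -(C / N) * (ψ j * y i j * (ψ l * y i l)) := by
      refine Finset.sum_congr rfl fun j _ => Finset.sum_congr rfl fun l _ => ?_
      rw [Finset.mul_sum, Finset.mul_sum, Finset.sum_mul]
      exact Finset.sum_congr rfl fun i _ => by ring
    have h2 : -(C / N) * (∑ i, (∑ j, ψ j * y i j) ^ 2)
        = ∑ j, ∑ l, ∑ i, -(C / N) * (ψ j * y i j * (ψ l * y i l)) := by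
      calc -(C / N) * (∑ i, (∑ j, ψ j * y i j) ^ 2)
          = ∑ i, ∑ j, ∑ l, -(C / N) * (ψ j * y i j * (ψ l * y i l)) := by
            rw [Finset.mul_sum]
            refine Finset.sum_congr rfl fun i _ => ?_
            rw [sq, Finset.sum_mul_sum, Finset.mul_sum]
            refine Finset.sum_congr rfl fun j _ => ?_
            rw [Finset.mul_sum]
        _ = ∑ j, ∑ i, ∑ l, -(C / N) * (ψ j * y i j * (ψ l * y i l)) := Finset.sum_comm
        _ = ∑ j, ∑ l, ∑ i, -(C / N) * (ψ j * y i j * (ψ l * y i l)) :=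
            Finset.sum_congr rfl fun j _ => Finset.sum_comm
    rw [h1, h2]
  -- positivity of the sum of squares
  have hSpos : 0 < ∑ i, (∑ j, ψ j * y i j) ^ 2 := by
    have hne : (∑ i, (∑ j, ψ j * y i j) ^ 2) ≠ 0 := by
      intro hall0
      have hall := (Finset.sum_eq_zero_iff_of_nonneg (fun i _ => sq_nonneg _)).mp hall0
      apply hψ
      have : (fun k => ψ k / that k) = 0 := by
        apply hker
        intro i
        have hi := hall i (Finset.mem_univ i)
        have : (∑ j, ψ j * y i j) = 0 := by
          have := sq_eq_zero_iff.mp hi; exact this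
        have hdi := (hpos i).ne'
        have expand : (∑ j, ψ j * y i j) = (∑ k, T i k * (ψ k / that k)) / d i := by
          rw [Finset.sum_div]
          refine Finset.sum_congr rfl fun j _ => ?_
          simp only [hy]
          field_simp
        rw [expand] at this
        exact (div_eq_zero_iff.mp this).resolve_right hdi
      funext k
      have hk := congrFun this k
      simp only [Pi.zero_apply] at hk ⊢
      have := (hthat k).ne'
      field_simp at hk
      simpa using hk
    exact lt_of_le_of_ne (Finset.sum_nonneg fun i _ => sq_nonneg _) (Ne.symm hne)
  have hc : -(C / N) < 0 := by
    have : (0:ℝ) < C / N := div_pos hCpos (Nat.cast_pos.mpr hN)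
    linarith
  calc (∑ j, ∑ l, ψ j * (-(C / N) * ∑ i, y i j * y i l) * ψ l)
      = -(C / N) * ∑ i, (∑ j, ψ j * y i j) ^ 2 := key
    _ < 0 := mul_neg_of_neg_of_pos hc hSpos
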